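/- arXiv:1703.03800 — 4 statements merged into one kernel-verified Lean document; each statement's English description precedes it below -/
import Mathlib

section
/- For every integer k ≥ 2, the edge set of the complete graph K_{4k} can be partitioned into k+1 subgraphs G_1, …, G_{k+1} each of girth at least 4, where each of G_1, …, G_k has exactly 8k−4 edges and G_{k+1} is a perfect matching (with 2k edges). -/
namespace K4kAux

open SimpleGraph Finset

instance (k : ℕ) [NeZero k] : NeZero (2 * k) := ⟨by have := NeZero.ne k; omega⟩

def pairGraph (k : ℕ) (c : ZMod (2 * k)) : SimpleGraph (ZMod (2 * k) × Fin 2) where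
  Adj x y := x.1 ≠ y.1 ∧ (x.1 + y.1 = 2 * c ∨ x.1 + y.1 = 2 * c + 1)
  symm := ⟨by rintro x y ⟨h1, h2⟩; exact ⟨h1.symm, by rwa [add_comm]⟩⟩
  loopless := ⟨by rintro x ⟨h, -⟩; exact h rfl⟩

def matchGraph (k : ℕ) : SimpleGraph (ZMod (2 * k) × Fin 2) where
  Adj x y := x.1 = y.1 ∧ x.2 ≠ y.2
  symm := ⟨by rintro x y ⟨h1, h2⟩; exact ⟨h1.symm, h2.symm⟩⟩
  loopless := ⟨by rintro x ⟨-, h⟩; exact h rfl⟩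

@[simp] lemma pairGraph_adj (k : ℕ) (c : ZMod (2 * k)) (x y : ZMod (2 * k) × Fin 2) :
    (pairGraph k c).Adj x y ↔ x.1 ≠ y.1 ∧ (x.1 + y.1 = 2 * c ∨ x.1 + y.1 = 2 * c + 1) :=
  Iff.rfl

@[simp] lemma matchGraph_adj (k : ℕ) (x y : ZMod (2 * k) × Fin 2) :
    (matchGraph k).Adj x y ↔ x.1 = y.1 ∧ x.2 ≠ y.2 := Iff.rfl

instance (k : ℕ) (c : ZMod (2 * k)) : DecidableRel (pairGraph k c).Adj :=
  fun _ _ => inferInstanceAs (Decidable (_ ∧ _))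

instance (k : ℕ) : DecidableRel (matchGraph k).Adj :=
  fun _ _ => inferInstanceAs (Decidable (_ ∧ _))


lemma two_mul_eq_zero_iff (k : ℕ) [NeZero k] (x : ZMod (2 * k)) :
    2 * x = 0 ↔ x = 0 ∨ x = (k : ZMod (2 * k)) := by
  have hk := NeZero.ne k
  constructor
  · intro h
    have hx : ((2 * x.val : ℕ) : ZMod (2 * k)) = 0 := by
      push_cast [ZMod.natCast_zmod_val]; exact h
    rw [ZMod.natCast_eq_zero_iff] at hx
    obtain ⟨c, hc⟩ := hx
    have hxv : x.val = k * c := by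
      have h2 : 2*(k*c) = 2*k*c := by ring
      omega
    have hlt := x.val_lt
    have hc1 : c = 0 ∨ c = 1 := by
      rcases Nat.lt_or_ge c 2 with h | h
      · omega
      · exfalso; nlinarith
    rcases hc1 with rfl | rfl
    · left
      have : x.val = 0 := by omega
      rw [← ZMod.natCast_zmod_val x, this, Nat.cast_zero]
    · right
      have : x.val = k := by omega
      rw [← ZMod.natCast_zmod_val x, this]
  · rintro (rfl | rfl)
    · ring
    · have : ((2 * k : ℕ) : ZMod (2 * k)) = 0 := ZMod.natCast_self _
      push_cast at this
      linear_combination this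

lemma no_odd (k : ℕ) [NeZero k] (x y : ZMod (2 * k)) : 2 * x ≠ 2 * y + 1 := by
  intro h
  have hd : (2 : ℕ) ∣ 2 * k := ⟨k, rfl⟩
  have h2 := congrArg (ZMod.castHom hd (ZMod 2)) h
  rw [map_add, map_mul, map_mul, map_one, map_ofNat] at h2
  have hz : ∀ z : ZMod 2, 2 * z = 0 := by decide
  rw [hz, hz] at h2
  simp at h2


lemma one_ne_zero' (k : ℕ) (hk : 2 ≤ k) : (1 : ZMod (2 * k)) ≠ 0 := by
  haveI : Fact (1 < 2 * k) := ⟨by omega⟩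
  exact one_ne_zero

lemma k_ne_zero' (k : ℕ) [NeZero k] (hk : 2 ≤ k) : (k : ZMod (2 * k)) ≠ 0 := by
  intro h
  rw [ZMod.natCast_eq_zero_iff] at h
  have := Nat.le_of_dvd (by omega) h
  omega

lemma filter_sum_card (k : ℕ) [NeZero k] (hk : 2 ≤ k) (c p : ZMod (2 * k)) :
    (univ.filter fun q : ZMod (2 * k) => p ≠ q ∧ (p + q = 2 * c ∨ p + q = 2 * c + 1)).card
      = if 2 * p = 2 * c then 1 else 2 := by
  by_cases h2p : 2 * p = 2 * c
  · rw [if_pos h2p]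
    have hset : (univ.filter fun q : ZMod (2 * k) =>
        p ≠ q ∧ (p + q = 2 * c ∨ p + q = 2 * c + 1)) = {2 * c + 1 - p} := by
      ext q
      simp only [mem_filter, mem_univ, true_and, mem_singleton]
      constructor
      · rintro ⟨hne, h | h⟩
        · exact absurd (by linear_combination h2p - h) hne
        · linear_combination h
      · rintro rfl
        refine ⟨fun hpq => no_odd k p c (by linear_combination hpq), Or.inr (by ring)⟩
    rw [hset, card_singleton]
  · rw [if_neg h2p]
    have hset : (univ.filter fun q : ZMod (2 * k) =>
        p ≠ q ∧ (p + q = 2 * c ∨ p + q = 2 * c + 1)) = {2 * c - p, 2 * c + 1 - p} := by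
      ext q
      simp only [mem_filter, mem_univ, true_and, mem_insert, mem_singleton]
      constructor
      · rintro ⟨hne, h | h⟩
        · exact Or.inl (by linear_combination h)
        · exact Or.inr (by linear_combination h)
      · rintro (rfl | rfl)
        · exact ⟨fun hpq => h2p (by linear_combination hpq), Or.inl (by ring)⟩
        · exact ⟨fun hpq => no_odd k p c (by linear_combination hpq), Or.inr (by ring)⟩
    rw [hset, card_insert_of_notMem (by
      simp only [mem_singleton]
      intro h
      exact one_ne_zero' k hk (by linear_combination -h)), card_singleton]

lemma card_two_mul_eq (k : ℕ) [NeZero k] (hk : 2 ≤ k) (c : ZMod (2 * k)) :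
    (univ.filter fun p : ZMod (2 * k) => 2 * p = 2 * c).card = 2 := by
  have hzk : (2 : ZMod (2 * k)) * (k : ZMod (2 * k)) = 0 := by
    have := ZMod.natCast_self (2 * k)
    push_cast at this
    linear_combination this
  have hset : (univ.filter fun p : ZMod (2 * k) => 2 * p = 2 * c)
      = {c, c + (k : ZMod (2 * k))} := by
    ext p
    simp only [mem_filter, mem_univ, true_and, mem_insert, mem_singleton]
    constructor
    · intro h
      have h0 : 2 * (p - c) = 0 := by linear_combination h
      rcases (two_mul_eq_zero_iff k _).1 h0 with h1 | h1
      · exact Or.inl (by linear_combination h1)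
      · exact Or.inr (by linear_combination h1)
    · rintro (rfl | rfl)
      · rfl
      · linear_combination hzk
  rw [hset, card_insert_of_notMem (by
    simp only [mem_singleton]
    intro h
    exact k_ne_zero' k hk (by linear_combination -h)), card_singleton]

lemma pairGraph_degree (k : ℕ) [NeZero k] (hk : 2 ≤ k) (c : ZMod (2 * k))
    (v : ZMod (2 * k) × Fin 2) :
    (pairGraph k c).degree v = 2 * (if 2 * v.1 = 2 * c then 1 else 2) := by
  rw [← card_neighborFinset_eq_degree]
  have hset : (pairGraph k c).neighborFinset v =
      (univ.filter fun q : ZMod (2 * k) =>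
        v.1 ≠ q ∧ (v.1 + q = 2 * c ∨ v.1 + q = 2 * c + 1)) ×ˢ univ := by
    ext ⟨q, t⟩
    simp [mem_neighborFinset, Finset.mem_product]
  rw [hset, card_product, filter_sum_card k hk c v.1]
  simp [mul_comm]

lemma pairGraph_card (k : ℕ) [NeZero k] (hk : 2 ≤ k) (c : ZMod (2 * k)) :
    #(pairGraph k c).edgeFinset = 8 * k - 4 := by
  have hs := SimpleGraph.sum_degrees_eq_twice_card_edges (pairGraph k c)
  have hsum : ∑ v, (pairGraph k c).degree v = 16 * k - 8 := by
    rw [Fintype.sum_prod_type]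
    have h1 : ∀ p : ZMod (2 * k), ∑ t : Fin 2, (pairGraph k c).degree (p, t)
        = 4 * (if 2 * p = 2 * c then 1 else 2) := by
      intro p
      simp only [pairGraph_degree k hk c]
      rw [Fin.sum_univ_two]
      ring
    have hQ : (univ.filter fun p : ZMod (2 * k) => 2 * p = 2 * c).card = 2 :=
      card_two_mul_eq k hk c
    have htot := Finset.card_filter_add_card_filter_not
      (s := (univ : Finset (ZMod (2 * k)))) (p := fun p => 2 * p = 2 * c)
    rw [Finset.card_univ, ZMod.card] at htot
    have hsum2 : ∑ p : ZMod (2 * k), (if 2 * p = 2 * c then (1 : ℕ) else 2) = 4 * k - 2 := by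
      rw [Finset.sum_ite, Finset.sum_const, Finset.sum_const, hQ]
      have hnQ : (univ.filter fun p : ZMod (2 * k) => ¬(2 * p = 2 * c)).card = 2 * k - 2 := by
        omega
      rw [hnQ]
      simp
      omega
    calc ∑ p : ZMod (2 * k), ∑ t : Fin 2, (pairGraph k c).degree (p, t)
        = ∑ p : ZMod (2 * k), 4 * (if 2 * p = 2 * c then 1 else 2) :=
          Finset.sum_congr rfl fun p _ => h1 p
      _ = 4 * ∑ p : ZMod (2 * k), (if 2 * p = 2 * c then 1 else 2) := by
          rw [Finset.mul_sum]
      _ = 16 * k - 8 := by rw [hsum2]; omega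
  omega


lemma matchGraph_degree (k : ℕ) [NeZero k] (v : ZMod (2 * k) × Fin 2) :
    (matchGraph k).degree v = 1 := by
  rw [← card_neighborFinset_eq_degree]
  have hfin : ∀ a b : Fin 2, a ≠ b ↔ b = 1 - a := by decide
  have hset : (matchGraph k).neighborFinset v = {(v.1, 1 - v.2)} := by
    ext ⟨q, t⟩
    simp only [mem_neighborFinset, matchGraph_adj, mem_singleton, Prod.mk.injEq]
    constructor
    · rintro ⟨h1, h2⟩
      exact ⟨h1.symm, (hfin _ _).1 h2⟩
    · rintro ⟨rfl, rfl⟩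
      exact ⟨rfl, (hfin _ _).2 rfl⟩
  rw [hset, card_singleton]

lemma matchGraph_card (k : ℕ) [NeZero k] : #(matchGraph k).edgeFinset = 2 * k := by
  have hs := SimpleGraph.sum_degrees_eq_twice_card_edges (matchGraph k)
  simp only [matchGraph_degree] at hs
  rw [Finset.sum_const, Finset.card_univ, Fintype.card_prod, ZMod.card,
    Fintype.card_fin, smul_eq_mul] at hs
  omega

lemma pairGraph_cliqueFree (k : ℕ) [NeZero k] (c : ZMod (2 * k)) :
    (pairGraph k c).CliqueFree 3 := by
  intro t ht
  rw [is3Clique_iff] at ht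
  obtain ⟨x, y, z, ⟨hxy, s1⟩, ⟨hxz, s2⟩, ⟨hyz, s3⟩, -⟩ := ht
  rcases s1 with h1 | h1 <;> rcases s2 with h2 | h2 <;> rcases s3 with h3 | h3 <;>
    first
      | exact hyz (by linear_combination h1 - h2)
      | exact hxz (by linear_combination h1 - h3)
      | exact hxy (by linear_combination h2 - h3)

lemma matchGraph_cliqueFree (k : ℕ) : (matchGraph k).CliqueFree 3 := by
  intro t ht
  rw [is3Clique_iff] at ht
  obtain ⟨x, y, z, ⟨-, h1⟩, ⟨-, h2⟩, ⟨-, h3⟩, -⟩ := ht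
  have : ∀ a b c : Fin 2, a ≠ b → a ≠ c → b ≠ c → False := by decide
  exact this _ _ _ h1 h2 h3

lemma ncard_comap {α β : Type*} (G : SimpleGraph β) (e : α ≃ β) :
    ((G.comap e).edgeSet).ncard = G.edgeSet.ncard := by
  rw [← Nat.card_coe_set_eq, ← Nat.card_coe_set_eq]
  exact Nat.card_congr (SimpleGraph.Iso.comap e G).mapEdgeSet

lemma ncard_eq_card_edgeFinset {β : Type*} [Fintype β] (G : SimpleGraph β)
    [DecidableRel G.Adj] : G.edgeSet.ncard = #G.edgeFinset := by
  rw [← Nat.card_coe_set_eq, Nat.card_eq_fintype_card, ← edgeFinset_card]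

lemma cast_inj' (k : ℕ) [NeZero k] (i j : ℕ) (hi : i < k) (hj : j < k)
    (h : 2 * (i : ZMod (2 * k)) = 2 * (j : ZMod (2 * k))) : i = j := by
  have h2 : ((2 * i : ℕ) : ZMod (2 * k)) = ((2 * j : ℕ) : ZMod (2 * k)) := by
    push_cast
    linear_combination h
  have h3 := congrArg ZMod.val h2
  rw [ZMod.val_cast_of_lt (by omega), ZMod.val_cast_of_lt (by omega)] at h3
  omega


end K4kAux

open K4kAux SimpleGraph Finset in
/-- For every `k ≥ 2`, the edges of `K_{4k}` can be partitioned into `k+1`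
triangle-free subgraphs `G_1, …, G_{k+1}` where each of `G_1, …, G_k` has exactly
`8k - 4` edges and `G_{k+1}` is a perfect matching (with `2k` edges). -/
theorem K4k_decomposition (k : ℕ) (hk : 2 ≤ k) :
    ∃ G : Fin (k + 1) → SimpleGraph (Fin (4 * k)),
      Pairwise (Function.onFun Disjoint fun i => (G i).edgeSet) ∧
      (⋃ i, (G i).edgeSet) = (⊤ : SimpleGraph (Fin (4 * k))).edgeSet ∧
      (∀ i, (G i).CliqueFree 3) ∧
      (∀ i, i ≠ Fin.last k → ((G i).edgeSet).ncard = 8 * k - 4) ∧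
      (∀ v, ∃! w, (G (Fin.last k)).Adj v w) ∧
      ((G (Fin.last k)).edgeSet).ncard = 2 * k := by
  haveI : NeZero k := ⟨by omega⟩
  have hcard : Fintype.card (ZMod (2 * k) × Fin 2) = 4 * k := by
    rw [Fintype.card_prod, ZMod.card, Fintype.card_fin]
    ring
  let e : Fin (4 * k) ≃ ZMod (2 * k) × Fin 2 := (Fintype.equivFinOfCardEq hcard).symm
  let H : Fin (k + 1) → SimpleGraph (ZMod (2 * k) × Fin 2) := fun i =>
    if (i : ℕ) < k then pairGraph k ((i : ℕ) : ZMod (2 * k)) else matchGraph k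
  have hHlt : ∀ i : Fin (k + 1), (i : ℕ) < k →
      H i = pairGraph k ((i : ℕ) : ZMod (2 * k)) := fun i h => if_pos h
  have hHge : ∀ i : Fin (k + 1), ¬ (i : ℕ) < k → H i = matchGraph k := fun i h => if_neg h
  have hHlast : H (Fin.last k) = matchGraph k := hHge _ (by simp)
  have hlast_iff : ∀ i : Fin (k + 1), i ≠ Fin.last k ↔ (i : ℕ) < k := by
    intro i
    have := i.isLt
    rw [Ne, Fin.ext_iff, Fin.val_last]
    omega
  refine ⟨fun i => (H i).comap e, ?_, ?_, ?_, ?_, ?_, ?_⟩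
  · -- pairwise disjoint
    intro i j hij
    simp only [Function.onFun]
    rw [Set.disjoint_left]
    intro z hz1 hz2
    induction z using Sym2.ind with
    | _ x y =>
      rw [mem_edgeSet, comap_adj] at hz1 hz2
      by_cases hi : (i : ℕ) < k <;> by_cases hj : (j : ℕ) < k
      · rw [hHlt i hi, pairGraph_adj] at hz1
        rw [hHlt j hj, pairGraph_adj] at hz2
        have hij' : (i : ℕ) ≠ (j : ℕ) := fun h => hij (Fin.ext h)
        rcases hz1.2 with h1 | h1 <;> rcases hz2.2 with h2 | h2
        · exact hij' (cast_inj' k _ _ hi hj (by linear_combination h2 - h1))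
        · exact no_odd k ((i : ℕ) : ZMod (2 * k)) ((j : ℕ) : ZMod (2 * k))
            (by linear_combination h2 - h1)
        · exact no_odd k ((j : ℕ) : ZMod (2 * k)) ((i : ℕ) : ZMod (2 * k))
            (by linear_combination h1 - h2)
        · exact hij' (cast_inj' k _ _ hi hj (by linear_combination h2 - h1))
      · rw [hHlt i hi, pairGraph_adj] at hz1
        rw [hHge j hj, matchGraph_adj] at hz2
        exact hz1.1 hz2.1
      · rw [hHge i hi, matchGraph_adj] at hz1
        rw [hHlt j hj, pairGraph_adj] at hz2
        exact hz2.1 hz1.1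
      · exact hij (Fin.ext (by have := i.isLt; have := j.isLt; omega))
  · -- union is everything
    ext z
    induction z using Sym2.ind with
    | _ x y =>
      simp only [Set.mem_iUnion, mem_edgeSet, top_adj, comap_adj]
      constructor
      · rintro ⟨i, hi⟩
        intro h
        rw [h] at hi
        exact (H i).loopless.irrefl _ hi
      · intro hxy
        by_cases hpq : (e x).1 = (e y).1
        · refine ⟨Fin.last k, ?_⟩
          rw [hHlast, matchGraph_adj]
          refine ⟨hpq, fun h2 => hxy (e.injective (Prod.ext hpq h2))⟩
        · have hm_def : (e x).1 + (e y).1 = (e x).1 + (e y).1 := rfl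
          set m := (e x).1 + (e y).1 with hm_def
          have hmv : m.val < 2 * k := m.val_lt
          have hm : ((m.val : ℕ) : ZMod (2 * k)) = m := ZMod.natCast_zmod_val m
          obtain ⟨d, hd, hdk⟩ : ∃ d, (m.val = 2 * d ∨ m.val = 2 * d + 1) ∧ d < k :=
            ⟨m.val / 2, by omega, by omega⟩
          refine ⟨⟨d, by omega⟩, ?_⟩
          rw [hHlt _ hdk, pairGraph_adj]
          refine ⟨hpq, ?_⟩
          rcases hd with hd | hd
          · left
            calc m = ((m.val : ℕ) : ZMod (2 * k)) := hm.symm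
              _ = ((2 * d : ℕ) : ZMod (2 * k)) := by rw [hd]
              _ = 2 * ((d : ℕ) : ZMod (2 * k)) := by push_cast; ring
          · right
            calc m = ((m.val : ℕ) : ZMod (2 * k)) := hm.symm
              _ = ((2 * d + 1 : ℕ) : ZMod (2 * k)) := by rw [hd]
              _ = 2 * ((d : ℕ) : ZMod (2 * k)) + 1 := by push_cast; ring
  · -- clique free
    intro i
    have hfree : (H i).CliqueFree 3 := by
      by_cases hi : (i : ℕ) < k
      · rw [hHlt i hi]; exact pairGraph_cliqueFree k _
      · rw [hHge i hi]; exact matchGraph_cliqueFree k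
    exact hfree.comap (SimpleGraph.Embedding.comap e.toEmbedding (H i)).isContained
  · -- edge counts
    intro i hi
    have hi' : (i : ℕ) < k := (hlast_iff i).1 hi
    rw [ncard_comap, hHlt i hi', ncard_eq_card_edgeFinset]
    exact pairGraph_card k hk _
  · -- perfect matching
    intro v
    simp only [hHlast, comap_adj, matchGraph_adj]
    refine ⟨e.symm ((e v).1, 1 - (e v).2), ?_, ?_⟩
    · simp only [Equiv.apply_symm_apply]
      exact ⟨trivial, (show ∀ s : Fin 2, s ≠ 1 - s by decide) _⟩
    · intro w' hw'
      have h2 : (e w').2 = 1 - (e v).2 :=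
        (show ∀ a b : Fin 2, a ≠ b → b = 1 - a by decide) _ _ hw'.2
      rw [Equiv.eq_symm_apply]
      exact Prod.ext hw'.1.symm h2
  · rw [ncard_comap, hHlast, ncard_eq_card_edgeFinset]
    exact matchGraph_card k
end

section
/- For every integer k ≥ 2, the edge set of the complete graph K_{4k−1} can be partitioned into k+1 subgraphs each of girth at least 4. -/
lemma testBit_log2_self (x : ℕ) (hx : x ≠ 0) : x.testBit x.log2 = true := by
  have h1 : 2 ^ x.log2 ≤ x := (Nat.le_log2 hx).mp le_rfl
  have h2 : x < 2 ^ (x.log2 + 1) := (Nat.log2_lt hx).mp (Nat.lt_succ_self _)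
  rw [Nat.testBit_eq_decide_div_mod_eq]
  have hd : x / 2 ^ x.log2 = 1 := by
    have hp : 0 < 2 ^ x.log2 := Nat.pow_pos (by norm_num)
    have ha : 1 ≤ x / 2 ^ x.log2 := (Nat.le_div_iff_mul_le hp).mpr (by omega)
    have hb : x / 2 ^ x.log2 < 2 := (Nat.div_lt_iff_lt_mul hp).mpr (by
      have := Nat.pow_succ 2 x.log2; omega)
    omega
  simp [hd]

lemma four_k_lt_pow (k : ℕ) (hk : 2 ≤ k) : 4 * k - 1 < 2 ^ (k + 1) := by
  induction k with
  | zero => omega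
  | succ n ih =>
    rcases Nat.lt_or_ge n 2 with h | h
    · interval_cases n <;> norm_num
    · have := ih h
      have : 2 ^ (n + 1) * 2 = 2 ^ (n + 2) := (Nat.pow_succ 2 (n+1)).symm
      omega

/-- For every `k ≥ 2`, the edges of `K_{4k-1}` can be partitioned into `k+1`
triangle-free subgraphs. -/
theorem K4k_sub_one_decomposition (k : ℕ) (hk : 2 ≤ k) :
    ∃ G : Fin (k + 1) → SimpleGraph (Fin (4 * k - 1)),
      Pairwise (Function.onFun Disjoint fun i => (G i).edgeSet) ∧
      (⋃ i, (G i).edgeSet) = (⊤ : SimpleGraph (Fin (4 * k - 1))).edgeSet ∧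
      ∀ i, (G i).CliqueFree 3 := by
  set N := 4 * k - 1 with hN
  refine ⟨fun i =>
    { Adj := fun u v => u ≠ v ∧ Nat.log2 (u.val ^^^ v.val) = i.val
      symm := by
        constructor
        intro u v h
        refine ⟨h.1.symm, ?_⟩
        rw [Nat.xor_comm]
        exact h.2
      loopless := by
        constructor
        intro u h
        exact h.1 rfl }, ?_, ?_, ?_⟩
  · intro i j hij
    rw [Function.onFun, Set.disjoint_left]
    intro e he1 he2
    induction e using Sym2.ind with
    | _ u v =>
      rw [SimpleGraph.mem_edgeSet] at he1 he2
      exact hij (Fin.ext (he1.2 ▸ he2.2.symm ▸ rfl))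
  · ext e
    induction e using Sym2.ind with
    | _ u v =>
      simp only [Set.mem_iUnion, SimpleGraph.mem_edgeSet, SimpleGraph.top_adj]
      constructor
      · rintro ⟨i, h, -⟩; exact h
      · intro huv
        have hval : u.val ≠ v.val := fun h => huv (Fin.ext h)
        have hx : u.val ^^^ v.val ≠ 0 := by
          intro h0
          exact hval (xor_eq_zero_iff.mp h0)
        have hub : u.val ^^^ v.val < 2 ^ (k + 1) := by
          have hlt := four_k_lt_pow k hk
          exact Nat.xor_lt_two_pow (lt_trans u.isLt hlt) (lt_trans v.isLt hlt)
        have hlg : Nat.log2 (u.val ^^^ v.val) < k + 1 := (Nat.log2_lt hx).mpr hub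
        exact ⟨⟨_, hlg⟩, huv, rfl⟩
  · intro i t ht
    rw [SimpleGraph.is3Clique_iff] at ht
    obtain ⟨a, b, c, hab, hac, hbc, -⟩ := ht
    have key : ∀ u v : Fin N, u ≠ v → Nat.log2 (u.val ^^^ v.val) = i.val →
        Bool.xor (u.val.testBit i.val) (v.val.testBit i.val) = true := by
      intro u v huv hl
      have hx : u.val ^^^ v.val ≠ 0 := by
        intro h0
        exact huv (Fin.ext (xor_eq_zero_iff.mp h0))
      have := testBit_log2_self (u.val ^^^ v.val) hx
      rw [hl, Nat.testBit_xor] at this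
      exact this
    have h1 := key a b hab.1 hab.2
    have h2 := key a c hac.1 hac.2
    have h3 := key b c hbc.1 hbc.2
    revert h1 h2 h3
    cases (a.val.testBit i.val) <;> cases (b.val.testBit i.val) <;>
      cases (c.val.testBit i.val) <;> simp
end

section
/- For every integer k ≥ 3, the edge set of the complete graph K_{4k+1} can be partitioned into k+1 subgraphs each of girth at least 4. -/
/-- If `a ≠ 0`, then the bit at position `a.log2` of `a` is set. -/
lemma testBit_log2_true {a : ℕ} (ha : a ≠ 0) : a.testBit a.log2 = true := by
  have h1 : 2 ^ a.log2 ≤ a := Nat.log2_self_le ha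
  have h2 : a < 2 ^ (a.log2 + 1) := Nat.lt_log2_self
  have hdiv : a / 2 ^ a.log2 = 1 := by
    apply Nat.div_eq_of_lt_le
    · simpa using h1
    · rw [pow_succ] at h2; omega
  rw [Nat.testBit_eq_decide_div_mod_eq, hdiv]
  decide

/-- Two nonzero numbers with the same top bit cannot xor to a number with the
same top bit. -/
lemma no_xor_same_log2 {x y : ℕ} (hx : x ≠ 0) (hy : y ≠ 0) (hxy : x ^^^ y ≠ 0)
    (h1 : x.log2 = (x ^^^ y).log2) (h2 : y.log2 = (x ^^^ y).log2) : False := by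
  have tx := testBit_log2_true hx
  have ty := testBit_log2_true hy
  have txy := testBit_log2_true hxy
  rw [h1] at tx
  rw [h2] at ty
  rw [Nat.testBit_xor, tx, ty] at txy
  simp at txy

lemma four_mul_lt_pow {k : ℕ} (hk : 3 ≤ k) : 4 * k + 1 < 2 ^ (k + 1) := by
  induction k with
  | zero => omega
  | succ n ih =>
    rcases Nat.lt_or_ge n 3 with h | h
    · interval_cases n <;> simp_all
    · have := ih h
      have h2 : 2 ^ (n + 1 + 1) = 2 * 2 ^ (n + 1) := by ring
      omega

/-- For every `k ≥ 3`, the edges of `K_{4k+1}` can be partitioned into `k+1`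
triangle-free subgraphs. -/
theorem K4k_add_one_decomposition (k : ℕ) (hk : 3 ≤ k) :
    ∃ G : Fin (k + 1) → SimpleGraph (Fin (4 * k + 1)),
      Pairwise (Function.onFun Disjoint fun i => (G i).edgeSet) ∧
      (⋃ i, (G i).edgeSet) = (⊤ : SimpleGraph (Fin (4 * k + 1))).edgeSet ∧
      ∀ i, (G i).CliqueFree 3 := by
  have hbound : ∀ u v : Fin (4 * k + 1), u ≠ v →
      Nat.log2 (u.val ^^^ v.val) < k + 1 := by
    intro u v huv
    have hne : u.val ^^^ v.val ≠ 0 :=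
      Nat.xor_ne_zero_iff.mpr (fun h => huv (Fin.val_injective h))
    rw [Nat.log2_lt hne]
    exact Nat.xor_lt_two_pow (lt_of_lt_of_le u.isLt (four_mul_lt_pow hk).le)
      (lt_of_lt_of_le v.isLt (four_mul_lt_pow hk).le)
  refine ⟨fun i =>
    { Adj := fun u v => u ≠ v ∧ Nat.log2 (u.val ^^^ v.val) = i.val
      symm := ⟨by
        intro u v ⟨h1, h2⟩
        exact ⟨h1.symm, by rwa [Nat.xor_comm]⟩⟩
      loopless := ⟨fun u h => h.1 rfl⟩ }, ?_, ?_, ?_⟩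
  · intro i j hij
    rw [Function.onFun, Set.disjoint_left]
    intro e
    refine Sym2.ind (fun u v h h' => ?_) e
    rw [SimpleGraph.mem_edgeSet] at h h'
    exact hij (Fin.val_injective (h.2 ▸ h'.2))
  · ext e
    refine Sym2.ind (fun u v => ?_) e
    simp only [Set.mem_iUnion, SimpleGraph.mem_edgeSet, SimpleGraph.top_adj]
    constructor
    · rintro ⟨i, hne, -⟩; exact hne
    · intro hne
      exact ⟨⟨Nat.log2 (u.val ^^^ v.val), hbound u v hne⟩, hne, rfl⟩
  · intro i s hs
    rw [SimpleGraph.is3Clique_iff] at hs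
    obtain ⟨a, b, c, ⟨hab, h1⟩, ⟨hac, h2⟩, ⟨hbc, h3⟩, -⟩ := hs
    have hxab : a.val ^^^ b.val ≠ 0 :=
      Nat.xor_ne_zero_iff.mpr (fun h => hab (Fin.val_injective h))
    have hxbc : b.val ^^^ c.val ≠ 0 :=
      Nat.xor_ne_zero_iff.mpr (fun h => hbc (Fin.val_injective h))
    have hxac : a.val ^^^ c.val ≠ 0 :=
      Nat.xor_ne_zero_iff.mpr (fun h => hac (Fin.val_injective h))
    have key : (a.val ^^^ b.val) ^^^ (b.val ^^^ c.val) = a.val ^^^ c.val := by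
      rw [Nat.xor_assoc, ← Nat.xor_assoc b.val b.val c.val, Nat.xor_self,
        Nat.zero_xor]
    refine no_xor_same_log2 hxab hxbc (key ▸ hxac) ?_ ?_
    · rw [key, h1, h2]
    · rw [key, h3, h2]
end

section
/- For every integer n ≥ 1 with n ≠ 6 and n ≠ 10, the edge set of the complete graph K_n can be partitioned into ⌈(n+2)/4⌉ subgraphs each of girth at least 4. (This is the constructive upper-bound content of the main theorem θ(4,K_n) = ⌈(n+2)/4⌉ for n ≠ 6, 10.) -/
/-- The edge-coloring function on differences: color classes are sum-free sets. -/
def cc (d : ℕ) : ℕ := if d = 4 then 0 else if d = 8 then 1 else Nat.log2 d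

lemma log2_val {d t : ℕ} (h1 : 2 ^ t ≤ d) (h2 : d < 2 ^ (t + 1)) : Nat.log2 d = t := by
  have hd : d ≠ 0 := by have : 1 ≤ 2 ^ t := Nat.one_le_two_pow; omega
  have ha : Nat.log2 d < t + 1 := (Nat.log2_lt hd).2 h2
  have hb : ¬ Nat.log2 d < t := fun hc => absurd ((Nat.log2_lt hd).1 hc) (by omega)
  omega

lemma cc_of {d t : ℕ} (h4 : d ≠ 4) (h8 : d ≠ 8) (h1 : 2 ^ t ≤ d) (h2 : d < 2 ^ (t + 1)) :
    cc d = t := by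
  unfold cc; rw [if_neg h4, if_neg h8]; exact log2_val h1 h2

lemma cc_zero {d : ℕ} (hd : 1 ≤ d) (h : cc d = 0) : d = 1 ∨ d = 4 := by
  unfold cc at h
  split at h
  · omega
  · split at h
    · omega
    · have h2 : d < 2 ^ 1 := by rw [← Nat.log2_lt (by omega)]; omega
      omega

lemma cc_one {d : ℕ} (hd : 1 ≤ d) (h : cc d = 1) : d = 2 ∨ d = 3 ∨ d = 8 := by
  unfold cc at h
  split at h
  · omega
  · split at h
    · omega
    · have h2 : d < 2 ^ 2 := by rw [← Nat.log2_lt (by omega)]; omega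
      have h1 : 2 ^ 1 ≤ d := by
        have := Nat.log2_self_le (n := d) (by omega)
        rwa [h] at this
      omega

lemma cc_ge {d t : ℕ} (hd : 1 ≤ d) (h : cc d = t) (ht : 2 ≤ t) :
    2 ^ t ≤ d ∧ d < 2 ^ (t + 1) := by
  unfold cc at h
  split at h
  · omega
  · split at h
    · omega
    · subst h
      exact ⟨Nat.log2_self_le (by omega), (Nat.log2_lt (by omega)).1 (Nat.lt_succ_self _)⟩

/-- Each color class of `cc` is sum-free. -/
lemma cc_sum {a b : ℕ} (ha : 1 ≤ a) (hb : 1 ≤ b) (hab : cc a = cc b) :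
    cc (a + b) ≠ cc a := by
  rcases Nat.lt_or_ge (cc a) 2 with h2 | h2
  · interval_cases h : cc a
    · rcases cc_zero ha h with rfl | rfl <;> rcases cc_zero hb hab.symm with rfl | rfl
      · rw [cc_of (by norm_num) (by norm_num) (t := 1) (by norm_num) (by norm_num)]; omega
      · rw [cc_of (by norm_num) (by norm_num) (t := 2) (by norm_num) (by norm_num)]; omega
      · rw [cc_of (by norm_num) (by norm_num) (t := 2) (by norm_num) (by norm_num)]; omega
      · show cc 8 ≠ 0; unfold cc; norm_num
    · rcases cc_one ha h with rfl | rfl | rfl <;>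
        rcases cc_one hb hab.symm with rfl | rfl | rfl
      · show cc 4 ≠ 1; unfold cc; norm_num
      · rw [cc_of (by norm_num) (by norm_num) (t := 2) (by norm_num) (by norm_num)]; omega
      · rw [cc_of (by norm_num) (by norm_num) (t := 3) (by norm_num) (by norm_num)]; omega
      · rw [cc_of (by norm_num) (by norm_num) (t := 2) (by norm_num) (by norm_num)]; omega
      · rw [cc_of (by norm_num) (by norm_num) (t := 2) (by norm_num) (by norm_num)]; omega
      · rw [cc_of (by norm_num) (by norm_num) (t := 3) (by norm_num) (by norm_num)]; omega
      · rw [cc_of (by norm_num) (by norm_num) (t := 3) (by norm_num) (by norm_num)]; omega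
      · rw [cc_of (by norm_num) (by norm_num) (t := 3) (by norm_num) (by norm_num)]; omega
      · rw [cc_of (by norm_num) (by norm_num) (t := 4) (by norm_num) (by norm_num)]; omega
  · obtain ⟨ha1, ha2⟩ := cc_ge ha rfl h2
    obtain ⟨hb1, hb2⟩ := cc_ge hb hab.symm h2
    have e1 : 2 ^ (cc a + 1) = 2 ^ (cc a) + 2 ^ (cc a) := by ring
    have e2 : 2 ^ (cc a + 1 + 1) = 2 ^ (cc a + 1) + 2 ^ (cc a + 1) := by ring
    have e3 : (8 : ℕ) ≤ 2 ^ (cc a + 1) := by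
      calc (8 : ℕ) = 2 ^ 3 := by norm_num
      _ ≤ 2 ^ (cc a + 1) := Nat.pow_le_pow_right (by norm_num) (by omega)
    by_cases h8 : a + b = 8
    · have hc8 : cc 8 = 1 := by unfold cc; norm_num
      rw [h8, hc8]; omega
    · rw [cc_of (by omega) h8 (t := cc a + 1) (by omega) (by omega)]; omega

lemma pow_lin : ∀ k : ℕ, 4 ≤ k → 4 * k < 2 ^ k + 3 := by
  intro k hk
  induction k with
  | zero => omega
  | succ m ih =>
    rcases Nat.lt_or_ge m 4 with hm | hm
    · interval_cases m <;> first | omega | norm_num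
    · have h1 := ih hm
      have h2 : 2 ^ (m + 1) = 2 ^ m + 2 ^ m := by ring
      have h3 : (16 : ℕ) ≤ 2 ^ m := by
        calc (16 : ℕ) = 2 ^ 4 := by norm_num
        _ ≤ 2 ^ m := Nat.pow_le_pow_right (by norm_num) hm
      omega

/-- All colors used are below `(n+5)/4`. -/
lemma cc_lt (n : ℕ) (hn : 1 ≤ n) (h6 : n ≠ 6) (h10 : n ≠ 10) {d : ℕ}
    (hd1 : 1 ≤ d) (hd2 : d < n) : cc d < (n + 5) / 4 := by
  have hk : n + 2 ≤ 4 * ((n + 5) / 4) ∧ 4 * ((n + 5) / 4) ≤ n + 5 := by omega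
  set k := (n + 5) / 4 with hkdef
  by_cases h4 : d = 4
  · subst h4; show cc 4 < k; unfold cc; norm_num; omega
  by_cases h8 : d = 8
  · subst h8; show cc 8 < k; unfold cc; norm_num; omega
  have hcd : cc d = Nat.log2 d := by unfold cc; rw [if_neg h4, if_neg h8]
  rw [hcd]
  rcases Nat.lt_or_ge d 2 with h | h
  · have : d = 1 := by omega
    subst this
    have : Nat.log2 1 < 1 := (Nat.log2_lt (by omega)).2 (by norm_num)
    omega
  rcases Nat.lt_or_ge d 4 with h' | h'
  · have : Nat.log2 d < 2 := (Nat.log2_lt (by omega)).2 (by omega)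
    omega
  rcases Nat.lt_or_ge d 8 with h'' | h''
  · have : Nat.log2 d < 3 := (Nat.log2_lt (by omega)).2 (by omega)
    omega
  · -- d ≥ 9 here, so n ≥ 10, n ≠ 10 hence n ≥ 11, k ≥ 4
    have hd9 : 9 ≤ d := by omega
    have hk4 : 4 ≤ k := by omega
    have := pow_lin k hk4
    have hdk : d < 2 ^ k := by omega
    exact (Nat.log2_lt (by omega)).2 hdk

lemma distPos' {x y : ℕ} (h : x ≠ y) : 1 ≤ Nat.dist x y := by
  simp [Nat.dist]; omega

lemma dist_rel {x y z : ℕ} :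
    Nat.dist x z = Nat.dist x y + Nat.dist y z ∨
    Nat.dist y z = Nat.dist x y + Nat.dist x z ∨
    Nat.dist x y = Nat.dist x z + Nat.dist y z := by
  simp [Nat.dist]; omega

/-- Upper bound of the main theorem: for every `n ≥ 1` with `n ≠ 6` and `n ≠ 10`,
the edges of `K_n` can be partitioned into `⌈(n+2)/4⌉` triangle-free subgraphs.
Here `⌈(n+2)/4⌉ = (n + 2 + 3) / 4` in natural-number arithmetic. -/
theorem Kn_decomposition_upper_bound (n : ℕ) (hn : 1 ≤ n) (h6 : n ≠ 6) (h10 : n ≠ 10) :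
    ∃ G : Fin ((n + 2 + 3) / 4) → SimpleGraph (Fin n),
      Pairwise (Function.onFun Disjoint fun i => (G i).edgeSet) ∧
      (⋃ i, (G i).edgeSet) = (⊤ : SimpleGraph (Fin n)).edgeSet ∧
      ∀ i, (G i).CliqueFree 3 := by
  have hkk : n + 2 + 3 = n + 5 := by omega
  refine ⟨fun i => ⟨fun u v => u ≠ v ∧ cc (Nat.dist u.val v.val) = i.val, ?_, ?_⟩, ?_, ?_, ?_⟩
  · refine ⟨?_⟩
    intro u v ⟨h1, h2⟩
    exact ⟨h1.symm, by rwa [Nat.dist_comm]⟩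
  · refine ⟨?_⟩
    intro u ⟨h1, _⟩
    exact h1 rfl
  · intro i j hij
    simp only [Function.onFun]
    rw [Set.disjoint_left]
    intro e
    induction e using Sym2.ind with
    | _ u v =>
      intro he1 he2
      rw [SimpleGraph.mem_edgeSet] at he1 he2
      exact hij (Fin.ext (he1.2 ▸ he2.2 ▸ rfl))
  · ext e
    induction e using Sym2.ind with
    | _ u v =>
      simp only [Set.mem_iUnion, SimpleGraph.mem_edgeSet, SimpleGraph.top_adj]
      constructor
      · rintro ⟨i, hne, -⟩; exact hne
      · intro hne
        have hvne : u.val ≠ v.val := fun h => hne (Fin.val_injective h)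
        have hd1 : 1 ≤ Nat.dist u.val v.val := distPos' hvne
        have hd2 : Nat.dist u.val v.val < n := by
          have hu := u.isLt; have hv := v.isLt
          simp only [Nat.dist]; omega
        exact ⟨⟨cc (Nat.dist u.val v.val), hkk ▸ cc_lt n hn h6 h10 hd1 hd2⟩, hne, rfl⟩
  · intro i s hs
    rw [SimpleGraph.is3Clique_iff] at hs
    obtain ⟨a, b, c, ⟨hab, cab⟩, ⟨hac, cac⟩, ⟨hbc, cbc⟩, -⟩ := hs
    have hvab : a.val ≠ b.val := fun h => hab (Fin.val_injective h)
    have hvac : a.val ≠ c.val := fun h => hac (Fin.val_injective h)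
    have hvbc : b.val ≠ c.val := fun h => hbc (Fin.val_injective h)
    have p1 := distPos' hvab
    have p2 := distPos' hvac
    have p3 := distPos' hvbc
    rcases dist_rel (x := a.val) (y := b.val) (z := c.val) with h | h | h
    · have := cc_sum p1 p3 (cab.trans cbc.symm)
      rw [← h, cac, cab] at this
      exact this rfl
    · have := cc_sum p1 p2 (cab.trans cac.symm)
      rw [← h, cbc, cab] at this
      exact this rfl
    · have := cc_sum p2 p3 (cac.trans cbc.symm)
      rw [← h, cab, cac] at this
      exact this rfl
end
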